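/- arXiv:2107.04168 — 2 statements merged into one kernel-verified Lean document; each statement's English description precedes it below -/
import Mathlib

section
/- The set of squarefree monomials corresponding to <_d-chains is closed under the sorting operator: for any α, β ∈ Λ_{r,d}(N), if i_1 ≤ i_2 ≤ … ≤ i_{2r} is the nondecreasing rearrangement of the multiset {α_1,…,α_r,β_1,…,β_r}, then both tuples (i_1, i_3, …, i_{2r−1}) and (i_2, i_4, …, i_{2r}) again belong to Λ_{r,d}(N) (and they form a sorted pair). -/
open MvPolynomial

/-- `α ∈ Λ_{r,d}(N)`: `1 ≤ α_1`, `α_r ≤ N`, and `α_{j+1} > α_j + d`. -/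
def memLambda (d N : ℕ) {r : ℕ} (α : Fin r → ℕ) : Prop :=
  (∀ i : Fin r, (i : ℕ) = 0 → 1 ≤ α i) ∧
  (∀ i : Fin r, (i : ℕ) = r - 1 → α i ≤ N) ∧
  (∀ i j : Fin r, (i : ℕ) + 1 = (j : ℕ) → α i + d < α j)

/-- `(α,β)` is sorted: `α_1 ≤ β_1 ≤ α_2 ≤ β_2 ≤ … ≤ α_r ≤ β_r`. -/
def sortedPair {r : ℕ} (α β : Fin r → ℕ) : Prop :=
  (∀ j, α j ≤ β j) ∧ ∀ i j : Fin r, (i : ℕ) + 1 = (j : ℕ) → β i ≤ α j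

/-- the variable `x_i` of `R = K[x_1,…,x_N]` (1-based index). -/
noncomputable def xv (K : Type*) [Field K] (N : ℕ) (i : ℕ) : MvPolynomial (Fin N) K :=
  if h : 1 ≤ i ∧ i ≤ N then X ⟨i - 1, by omega⟩ else 0

/-- `M(α)`: the maximal minor of the extended Hankel matrix `H_{r,c,d}` whose
main diagonal is `x_{α_1},…,x_{α_r}`; its `(i,j)` entry is `x_{α_j + (i-j)d}`. -/
noncomputable def minorM (K : Type*) [Field K] (N d : ℕ) {r : ℕ} (α : Fin r → ℕ) :
    MvPolynomial (Fin N) K :=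
  Matrix.det (Matrix.of fun i j : Fin r => xv K N (α j + (i : ℕ) * d - (j : ℕ) * d))

/-- the lex-leading exponent of `f` (with `⊥` for `f = 0`), with respect to the
lexicographic order induced by `x_1 > x_2 > … > x_N`. -/
noncomputable def leadExp {K : Type*} [Field K] {N : ℕ} (f : MvPolynomial (Fin N) K) :
    WithBot (Lex (Fin N →₀ ℕ)) :=
  (f.support.image toLex).max

/-- the lex-leading exponent of a nonzero `f` as a monomial exponent vector. -/
noncomputable def leadExponent {K : Type*} [Field K] {N : ℕ} (f : MvPolynomial (Fin N) K) :
    Fin N →₀ ℕ :=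
  ofLex (WithBot.unbotD (toLex 0) (f.support.image toLex).max)

section SortAux

lemma countP_ofFn {n : ℕ} (f : Fin n → ℕ) (P : ℕ → Prop) [DecidablePred P] :
    Multiset.countP P ↑(List.ofFn f) = (Finset.univ.filter (fun i => P (f i))).card := by
  have h1 : (Finset.filter (fun i => P (f i)) Finset.univ).card
      = Multiset.countP (fun i => P (f i))
        ((List.finRange n : List (Fin n)) : Multiset (Fin n)) := by
    rw [Finset.card, Finset.filter_val, Multiset.countP_eq_card_filter]; rfl
  rw [h1, Multiset.coe_countP, Multiset.coe_countP, List.ofFn_eq_map, List.countP_map]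
  rfl

lemma lambda_chain {d N r : ℕ} {α : Fin r → ℕ} (hα : memLambda d N α) :
    ∀ i j : Fin r, (i : ℕ) < (j : ℕ) → α i + d < α j := by
  obtain ⟨-, -, h3⟩ := hα
  have key : ∀ t : ℕ, ∀ i j : Fin r, (i : ℕ) + t + 1 = (j : ℕ) → α i + d < α j := by
    intro t
    induction t with
    | zero => intro i j h; exact h3 i j (by omega)
    | succ t ih =>
      intro i j h
      have hlt : (i : ℕ) + t + 1 < r := by have := j.isLt; omega
      have h1 := ih i ⟨(i : ℕ) + t + 1, hlt⟩ rfl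
      have h2 := h3 ⟨(i : ℕ) + t + 1, hlt⟩ j (by simp; omega)
      omega
  intro i j hij
  exact key ((j : ℕ) - (i : ℕ) - 1) i j (by omega)

lemma lambda_pos {d N r : ℕ} {α : Fin r → ℕ} (hr : 0 < r) (hα : memLambda d N α) :
    ∀ i : Fin r, 1 ≤ α i := by
  intro i
  have h0 := hα.1 ⟨0, hr⟩ rfl
  rcases Nat.eq_zero_or_pos (i : ℕ) with h | h
  · have : i = ⟨0, hr⟩ := Fin.ext h
    rwa [this]
  · have := lambda_chain hα ⟨0, hr⟩ i (by simpa using h)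
    omega

lemma lambda_le {d N r : ℕ} {α : Fin r → ℕ} (hr : 0 < r) (hα : memLambda d N α) :
    ∀ i : Fin r, α i ≤ N := by
  intro i
  have hlast : (r : ℕ) - 1 < r := by omega
  have h0 := hα.2.1 ⟨r - 1, hlast⟩ rfl
  rcases Nat.lt_or_ge (i : ℕ) (r - 1) with h | h
  · have := lambda_chain hα i ⟨r - 1, hlast⟩ (by simpa using h)
    omega
  · have : i = ⟨r - 1, hlast⟩ := Fin.ext (by have := i.isLt; simp; omega)
    rwa [this]

end SortAux

/-- the set of `<_d`-chains is closed under the sorting operator. -/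
theorem sort_closed (K : Type*) [Field K] (d r c N : ℕ)
    (hd : 1 ≤ d) (hr : 2 ≤ r) (hrc : r ≤ c) (hN : N = c + (r - 1) * d)
    (α β : Fin r → ℕ) (hα : memLambda d N α) (hβ : memLambda d N β)
    (γ : Fin (2 * r) → ℕ) (hmono : Monotone γ)
    (hmult : (List.ofFn γ : Multiset ℕ) = (List.ofFn α : Multiset ℕ) + (List.ofFn β : Multiset ℕ)) :
    memLambda d N (fun j : Fin r => γ ⟨2 * (j : ℕ), by have := j.isLt; omega⟩) ∧
    memLambda d N (fun j : Fin r => γ ⟨2 * (j : ℕ) + 1, by have := j.isLt; omega⟩) ∧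
    sortedPair (fun j : Fin r => γ ⟨2 * (j : ℕ), by have := j.isLt; omega⟩)
      (fun j : Fin r => γ ⟨2 * (j : ℕ) + 1, by have := j.isLt; omega⟩) := by
    classical
  have hr0 : 0 < r := by omega
  -- counting transfer
  have hc : ∀ (P : ℕ → Prop) [DecidablePred P],
      (Finset.univ.filter (fun i => P (γ i))).card
        = (Finset.univ.filter (fun i => P (α i))).card
          + (Finset.univ.filter (fun i => P (β i))).card := by
    intro P _
    rw [← countP_ofFn, ← countP_ofFn, ← countP_ofFn, hmult, Multiset.countP_add]
  -- lower bound on count from membership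
  have A : ∀ (k : Fin (2 * r)) (x : ℕ), γ k ≤ x →
      (k : ℕ) + 1 ≤ (Finset.univ.filter (fun i => γ i ≤ x)).card := by
    intro k x h
    calc (k : ℕ) + 1 = (Finset.Iic k).card := (Fin.card_Iic k).symm
      _ ≤ _ := Finset.card_le_card (fun j hj => by
          simp only [Finset.mem_Iic] at hj
          simp only [Finset.mem_filter, Finset.mem_univ, true_and]
          exact le_trans (hmono hj) h)
  -- membership from count
  have C : ∀ (k : Fin (2 * r)) (x : ℕ),
      (k : ℕ) < (Finset.univ.filter (fun i => γ i ≤ x)).card → γ k ≤ x := by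
    intro k x h
    by_contra hcon
    push_neg at hcon
    have hsub : (Finset.univ.filter (fun i => γ i ≤ x)) ⊆ Finset.Iio k := by
      intro j hj
      simp only [Finset.mem_filter, Finset.mem_univ, true_and] at hj
      simp only [Finset.mem_Iio]
      by_contra h2
      push_neg at h2
      exact absurd (le_trans (hmono h2) hj) (not_le.2 hcon)
    have := Finset.card_le_card hsub
    rw [Fin.card_Iio] at this
    omega
  -- window lemma
  have W : ∀ (f : Fin r → ℕ), (∀ i j : Fin r, (i : ℕ) < (j : ℕ) → f i + d < f j) →
      ∀ x : ℕ, (Finset.univ.filter (fun i => f i ≤ x + d)).card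
        ≤ (Finset.univ.filter (fun i => f i < x)).card + 1 := by
    intro f hf x
    have hsub : (Finset.univ.filter (fun i => f i ≤ x + d))
        ⊆ (Finset.univ.filter (fun i => f i < x))
          ∪ (Finset.univ.filter (fun i => x ≤ f i ∧ f i ≤ x + d)) := by
      intro j hj
      simp only [Finset.mem_filter, Finset.mem_univ, true_and] at hj
      simp only [Finset.mem_union, Finset.mem_filter, Finset.mem_univ, true_and]
      omega
    have hone : (Finset.univ.filter (fun i => x ≤ f i ∧ f i ≤ x + d)).card ≤ 1 := by
      rw [Finset.card_le_one]
      intro a ha b hb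
      simp only [Finset.mem_filter, Finset.mem_univ, true_and] at ha hb
      by_contra hne
      rcases Nat.lt_or_ge (a : ℕ) (b : ℕ) with h | h
      · have := hf a b h; omega
      · have hba : (b : ℕ) < (a : ℕ) := by
          rcases Nat.lt_or_ge (b : ℕ) (a : ℕ) with h' | h'
          · exact h'
          · exact absurd (Fin.ext (le_antisymm h' h)) hne
        have := hf b a hba; omega
    calc (Finset.univ.filter (fun i => f i ≤ x + d)).card
        ≤ _ := Finset.card_le_card hsub
      _ ≤ (Finset.univ.filter (fun i => f i < x)).card
            + (Finset.univ.filter (fun i => x ≤ f i ∧ f i ≤ x + d)).card :=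
          Finset.card_union_le _ _
      _ ≤ _ := by omega
  -- the key gap lemma
  have key : ∀ (k m : Fin (2 * r)), (k : ℕ) + 2 = (m : ℕ) → γ k + d < γ m := by
    intro k m hkm
    set x := γ k with hx
    have hs : (Finset.univ.filter (fun i => γ i < x)).card ≤ (k : ℕ) := by
      have hsub : (Finset.univ.filter (fun i => γ i < x)) ⊆ Finset.Iio k := by
        intro j hj
        simp only [Finset.mem_filter, Finset.mem_univ, true_and] at hj
        simp only [Finset.mem_Iio]
        by_contra h2
        push_neg at h2
        exact absurd (hmono h2) (not_le.2 hj)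
      have := Finset.card_le_card hsub
      rwa [Fin.card_Iio] at this
    have hle : (Finset.univ.filter (fun i => γ i ≤ x + d)).card ≤ (k : ℕ) + 2 := by
      have h1 := hc (fun y => y ≤ x + d)
      have h2 := hc (fun y => y < x)
      have hwα := W α (lambda_chain hα) x
      have hwβ := W β (lambda_chain hβ) x
      omega
    by_contra hcon
    push_neg at hcon
    have := A m (x + d) hcon
    omega
  -- all values are between 1 and N
  have hpos : ∀ j : Fin (2 * r), 1 ≤ γ j := by
    intro j
    by_contra h
    push_neg at h
    have h0 := A j 0 (by omega)
    have h1 := hc (fun y => y ≤ 0)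
    have hαe : (Finset.univ.filter (fun i => α i ≤ 0)).card = 0 := by
      rw [Finset.card_eq_zero, Finset.filter_eq_empty_iff]
      intro i _
      have := lambda_pos hr0 hα i
      omega
    have hβe : (Finset.univ.filter (fun i => β i ≤ 0)).card = 0 := by
      rw [Finset.card_eq_zero, Finset.filter_eq_empty_iff]
      intro i _
      have := lambda_pos hr0 hβ i
      omega
    omega
  have hleN : ∀ j : Fin (2 * r), γ j ≤ N := by
    intro j
    apply C j N
    have h1 := hc (fun y => y ≤ N)
    have hαf : (Finset.univ.filter (fun i => α i ≤ N)).card = r := by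
      rw [Finset.filter_true_of_mem (fun i _ => lambda_le hr0 hα i)]
      simp
    have hβf : (Finset.univ.filter (fun i => β i ≤ N)).card = r := by
      rw [Finset.filter_true_of_mem (fun i _ => lambda_le hr0 hβ i)]
      simp
    have := j.isLt
    omega
  refine ⟨⟨fun i _ => hpos _, fun i _ => hleN _, fun i j hij => key _ _ (by simp; omega)⟩,
    ⟨fun i _ => hpos _, fun i _ => hleN _, fun i j hij => key _ _ (by simp; omega)⟩,
    fun j => hmono (by simp [Fin.le_def]),
    fun i j hij => hmono (by simp [Fin.le_def]; omega)⟩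
end

section
/- For all integers 1 ≤ c_1 < c_2 < … < c_{r+1} ≤ c and all 1 ≤ k ≤ r, the identity Σ_{j=1}^{r+1} (−1)^{j+1} x_{c_j+(k−1)d} · M(c_1, c_2+d, …, c_{j−1}+(j−2)d, c_{j+1}+(j−1)d, …, c_{r+1}+(r−1)d) = 0 holds in R; that is, these alternating sums are syzygies of the maximal minors of the extended Hankel matrix H_{r,c,d}. -/
open MvPolynomial

/-- The `r`-tuple `(c_1, c_2+d, …, c_{j−1}+(j−2)d, c_{j+1}+(j−1)d, …, c_{r+1}+(r−1)d)`
obtained from `c_1 < … < c_{r+1}` by omitting the `j`-th entry (here `j` is 0-based). -/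
def tupleOf (d : ℕ) {r : ℕ} (cs : Fin (r + 1) → ℕ) (j : Fin (r + 1)) : Fin r → ℕ :=
  fun l => if (l : ℕ) < (j : ℕ) then cs (Fin.castSucc l) + (l : ℕ) * d
           else cs l.succ + (l : ℕ) * d

lemma tupleOf_mem {d r c N : ℕ} (hN : N = c + (r - 1) * d) (hr : 1 ≤ r)
    (cs : Fin (r + 1) → ℕ) (hmono : StrictMono cs) (h1 : 1 ≤ cs 0)
    (hc : cs (Fin.last r) ≤ c) (j : Fin (r + 1)) :
    memLambda d N (tupleOf d cs j) := by
  have hm : ∀ a b : Fin (r + 1), (a : ℕ) ≤ (b : ℕ) → cs a ≤ cs b := by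
    intro a b hab
    exact hmono.monotone (by exact_mod_cast (Fin.le_def.mpr hab))
  have hs : ∀ a b : Fin (r + 1), (a : ℕ) < (b : ℕ) → cs a < cs b := by
    intro a b hab
    exact hmono (by exact_mod_cast (Fin.lt_def.mpr hab))
  have hb : ∀ a : Fin (r + 1), cs a ≤ c := fun a => le_trans (hm a (Fin.last r) (by
    have := a.isLt; simp [Fin.last]; omega)) hc
  have h01 : 1 ≤ cs ⟨1, by omega⟩ := le_trans h1 (le_of_lt (hs 0 ⟨1, by omega⟩ (by simp)))
  refine ⟨?_, ?_, ?_⟩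
  · intro i hi
    unfold tupleOf
    split <;> rename_i h
    · have : cs (Fin.castSucc i) ≥ 1 := by
        refine le_trans h1 (hm 0 _ (by simp))
      omega
    · have : cs i.succ ≥ 1 := le_trans h1 (hm 0 _ (by simp))
      omega
  · intro i hi
    unfold tupleOf
    have hiv : (i : ℕ) = r - 1 := hi
    have hle1 : cs (Fin.castSucc i) ≤ c := hb _
    have hle2 : cs i.succ ≤ c := hb _
    simp only [hiv]
    split <;> omega
  · intro i i' hii'
    unfold tupleOf
    have hv : (i' : ℕ) = (i : ℕ) + 1 := hii'.symm
    have hcs1 : cs (Fin.castSucc i) < cs (Fin.castSucc i') := hs _ _ (by simpa using (by omega : (i:ℕ) < (i':ℕ)))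
    have hcs2 : cs (Fin.castSucc i) < cs i'.succ := hs _ _ (by simp; omega)
    have hcs3 : cs i.succ < cs i'.succ := hs _ _ (by simp; omega)
    have hcs4 : cs i.succ ≤ cs (Fin.castSucc i') := hm _ _ (by simp; omega)
    split <;> split <;> rename_i h h' <;> nlinarith [hv]

/-- the alternating sums `Σ_j (−1)^{j+1} x_{c_j+(k−1)d} M(…ĉ_j…)` vanish;
they are syzygies of the maximal minors of `H_{r,c,d}`. -/
theorem syzygy_identity (K : Type*) [Field K] (d r c N : ℕ)
    (hd : 1 ≤ d) (hr : 2 ≤ r) (hrc : r ≤ c) (hN : N = c + (r - 1) * d)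
    (cs : Fin (r + 1) → ℕ) (hmono : StrictMono cs) (h1 : 1 ≤ cs 0)
    (hcc : cs (Fin.last r) ≤ c) (k : ℕ) (hk1 : 1 ≤ k) (hkr : k ≤ r) :
    ∑ j : Fin (r + 1), (-1 : MvPolynomial (Fin N) K) ^ (j : ℕ) *
        (xv K N (cs j + (k - 1) * d) * minorM K N d (tupleOf d cs j)) = 0 := by
  classical
  -- the (r+1)×(r+1) matrix whose row 0 is the k-th Hankel row and row i+1 the i-th
  set B : Matrix (Fin (r + 1)) (Fin (r + 1)) (MvPolynomial (Fin N) K) :=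
    Matrix.of (fun i j : Fin (r + 1) =>
      xv K N (cs j + (if (i : ℕ) = 0 then k - 1 else (i : ℕ) - 1) * d)) with hB
  have hdet0 : B.det = 0 := by
    apply Matrix.det_zero_of_row_eq (i := (0 : Fin (r + 1))) (j := ⟨k, by omega⟩)
    · intro h
      have := congrArg (Fin.val) h
      simp at this
      omega
    · funext j
      simp only [hB, Matrix.of_apply]
      norm_num
  have hexp := Matrix.det_succ_row_zero B
  rw [hdet0] at hexp
  rw [← hexp.symm]
  apply Finset.sum_congr rfl
  intro j _
  have hB0 : B 0 j = xv K N (cs j + (k - 1) * d) := by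
    simp [hB]
  rw [hB0, mul_assoc]
  congr 2
  unfold minorM
  congr 1
  funext i l
  simp only [hB, Matrix.submatrix_apply, Matrix.of_apply]
  have hi : ((i.succ : Fin (r + 1)) : ℕ) = (i : ℕ) + 1 := rfl
  have hi0 : ((i.succ : Fin (r + 1)) : ℕ) ≠ 0 := by simp
  rw [if_neg hi0, hi]
  have hsa : tupleOf d cs j l = cs (j.succAbove l) + (l : ℕ) * d := by
    unfold tupleOf
    rw [Fin.succAbove]
    by_cases h : (l : ℕ) < (j : ℕ)
    · rw [if_pos h, if_pos (by simpa [Fin.lt_def] using h)]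
    · rw [if_neg h, if_neg (by simpa [Fin.lt_def] using h)]
  rw [hsa, Nat.add_sub_cancel]
  congr 1
  omega
end
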